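/- Let p be a prime with p ≡ 2 (mod 3), α ≥ 1, and let M be the automorphism of (ℤ/p^αℤ)² given by M(a,b) = (−b, a−b). Then the number of M-stable subgroups of (ℤ/p^αℤ)² of order p^α is 1 if α is even and 0 if α is odd. -/

import Mathlib

/-- The order-3 automorphism of `(ℤ/nℤ)²` given by the matrix `[[0,-1],[1,-1]]`,
i.e. `(a,b) ↦ (-b, a-b)`. -/
def Mxi (n : ℕ) : (ZMod n × ZMod n) →+ (ZMod n × ZMod n) :=
  AddMonoidHom.mk' (fun z => (-z.2, z.1 - z.2)) (by
    intro a b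
    ext
    · simp
      ring
    · simp
      ring)

lemma Mxi_apply {n : ℕ} (z : ZMod n × ZMod n) : Mxi n z = (-z.2, z.1 - z.2) := rfl

lemma noRoot {p : ℕ} (hp : p.Prime) (hp3 : p % 3 = 2) (t : ZMod p) : t ^ 2 - t + 1 ≠ 0 := by
  haveI : Fact p.Prime := ⟨hp⟩
  intro h
  rcases eq_or_ne p 2 with rfl | hne2
  · revert h; revert t; decide
  · have ht0 : t ≠ 0 := by
      rintro rfl; simp at h
    have ht2 : t ^ 2 = t - 1 := by linear_combination h
    have ht3 : (t ^ 2) ^ 3 = 1 := by linear_combination (t^4 + t^3 - t - 1) * h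
    have htne : t ^ 2 ≠ 1 := by
      intro h1
      have h2 : t = 2 := by
        have := ht2; rw [h1] at this
        linear_combination -this
      rw [h2] at h1
      have h3 : (3 : ZMod p) = 0 := by linear_combination h1
      have hd : (p : ℕ) ∣ 3 := by
        exact_mod_cast (ZMod.natCast_eq_zero_iff 3 p).mp (by exact_mod_cast h3)
      have := (Nat.prime_dvd_prime_iff_eq hp (by norm_num)).mp hd
      omega
    haveI : Fact (Nat.Prime 3) := ⟨by norm_num⟩
    have ho : orderOf (t ^ 2) = 3 := orderOf_eq_prime ht3 htne
    have hdvd : orderOf (t ^ 2) ∣ p - 1 :=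
      orderOf_dvd_of_pow_eq_one (ZMod.pow_card_sub_one_eq_one (pow_ne_zero 2 ht0))
    rw [ho] at hdvd
    have hp2 := hp.two_le
    omega

lemma normZero {p : ℕ} (hp : p.Prime) (hp3 : p % 3 = 2) {a b : ZMod p}
    (h : a ^ 2 - a * b + b ^ 2 = 0) : a = 0 ∧ b = 0 := by
  haveI : Fact p.Prime := ⟨hp⟩
  rcases eq_or_ne b 0 with rfl | hb
  · have : a ^ 2 = 0 := by linear_combination h
    exact ⟨pow_eq_zero_iff (n := 2) (by norm_num) |>.mp this, rfl⟩
  · exfalso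
    apply noRoot hp hp3 (a * b⁻¹)
    have key : (a * b⁻¹) ^ 2 - (a * b⁻¹) + 1 = (a ^ 2 - a * b + b ^ 2) * (b⁻¹) ^ 2 := by
      field_simp
    rw [key, h, zero_mul]

-- a unit in ZMod (p^α) iff nonzero image in ZMod p
lemma isUnit_of_cast_ne {p α : ℕ} (hp : p.Prime) (hα : 1 ≤ α) {u : ZMod (p ^ α)}
    (h : ZMod.castHom (dvd_pow_self p (by omega : α ≠ 0)) (ZMod p) u ≠ 0) : IsUnit u := by
  haveI : Fact p.Prime := ⟨hp⟩
  haveI : NeZero (p ^ α) := ⟨pow_ne_zero _ hp.pos.ne'⟩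
  have hu : u = ((u.val : ℕ) : ZMod (p ^ α)) := by
    rw [ZMod.natCast_val, ZMod.cast_id]
  rw [hu]
  rw [ZMod.isUnit_iff_coprime]
  apply Nat.Coprime.pow_right
  rw [Nat.coprime_comm, hp.coprime_iff_not_dvd]
  intro hdvd
  apply h
  have : (ZMod.castHom (dvd_pow_self p (by omega : α ≠ 0)) (ZMod p)) u = ((u.val : ℕ) : ZMod p) := by
    rw [ZMod.castHom_apply, ← ZMod.natCast_val]
  rw [this, ZMod.natCast_eq_zero_iff]
  exact hdvd

-- if cast to ZMod p is zero then divisible by p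
lemma exists_p_factor {p α : ℕ} (hα : α ≠ 0) {x : ZMod (p ^ α)}
    (h : ZMod.castHom (dvd_pow_self p hα) (ZMod p) x = 0) :
    ∃ y : ZMod (p ^ α), x = (p : ZMod (p ^ α)) * y := by
  obtain ⟨k, rfl⟩ := ZMod.intCast_surjective x
  rw [map_intCast, ZMod.intCast_zmod_eq_zero_iff_dvd] at h
  obtain ⟨m, rfl⟩ := h
  exact ⟨(m : ZMod (p ^ α)), by push_cast; ring⟩

/-- The subgroup of `ZMod (p^α)` killed by `p^j`. -/
def Tsub (p α j : ℕ) : AddSubgroup (ZMod (p ^ α)) where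
  carrier := {x | (p : ZMod (p ^ α)) ^ j * x = 0}
  zero_mem' := by simp
  add_mem' := by
    intro x y hx hy
    simp only [Set.mem_setOf_eq, mul_add] at *
    rw [hx, hy, add_zero]
  neg_mem' := by
    intro x hx
    simp only [Set.mem_setOf_eq, mul_neg] at *
    rw [hx, neg_zero]

lemma mem_Tsub {p α j : ℕ} {x : ZMod (p ^ α)} :
    x ∈ Tsub p α j ↔ (p : ZMod (p ^ α)) ^ j * x = 0 := Iff.rfl

def Hsub (p α j : ℕ) : AddSubgroup (ZMod (p ^ α) × ZMod (p ^ α)) :=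
  (Tsub p α j).prod (Tsub p α j)

lemma mem_Hsub {p α j : ℕ} {z : ZMod (p ^ α) × ZMod (p ^ α)} :
    z ∈ Hsub p α j ↔ (p : ZMod (p ^ α)) ^ j * z.1 = 0 ∧ (p : ZMod (p ^ α)) ^ j * z.2 = 0 :=
  AddSubgroup.mem_prod

lemma exists_factor {p α : ℕ} (hp : p.Prime) (j : ℕ) (hj : j ≤ α) {x : ZMod (p ^ α)}
    (h : (p : ZMod (p ^ α)) ^ j * x = 0) :
    ∃ y : ZMod (p ^ α), x = (p : ZMod (p ^ α)) ^ (α - j) * y := by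
  obtain ⟨k, rfl⟩ := ZMod.intCast_surjective x
  have h2 : (((p : ℤ) ^ j * k : ℤ) : ZMod (p ^ α)) = 0 := by push_cast; exact h
  rw [ZMod.intCast_zmod_eq_zero_iff_dvd] at h2
  have h3 : (p : ℤ) ^ j * (p : ℤ) ^ (α - j) ∣ (p : ℤ) ^ j * k := by
    rw [← pow_add, show j + (α - j) = α by omega]
    exact_mod_cast h2
  obtain ⟨m, rfl⟩ := (mul_dvd_mul_iff_left (a := (p : ℤ) ^ j)
      (pow_ne_zero _ (by exact_mod_cast hp.pos.ne'))).mp h3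
  exact ⟨(m : ZMod (p ^ α)), by push_cast; ring⟩

lemma card_Tsub {p α : ℕ} (hp : p.Prime) (j : ℕ) (hj : j ≤ α) :
    Nat.card (Tsub p α j) = p ^ j := by
  have hppos : (p : ℤ) ≠ 0 := by exact_mod_cast hp.pos.ne'
  have hpα : (p : ZMod (p ^ α)) ^ (α - j) * (p : ZMod (p ^ α)) ^ j = 0 := by
    rw [← pow_add, show (α - j) + j = α by omega, ← Nat.cast_pow, ZMod.natCast_self]
  set a : ZMod (p ^ α) := (p : ZMod (p ^ α)) ^ (α - j) with ha
  have hfa : ((zmultiplesHom (ZMod (p ^ α))) a) ((p ^ j : ℕ) : ℤ) = 0 := by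
    simp only [zmultiplesHom_apply, zsmul_eq_mul]
    push_cast
    rw [mul_comm]
    exact hpα
  set φ : ZMod (p ^ j) →+ ZMod (p ^ α) :=
    ZMod.lift (p ^ j) ⟨(zmultiplesHom (ZMod (p ^ α))) a, hfa⟩ with hφ
  have hφc : ∀ k : ℤ, φ ((k : ℤ) : ZMod (p ^ j)) = (k : ZMod (p ^ α)) * a := by
    intro k
    rw [hφ, ZMod.lift_coe]
    simp only [zmultiplesHom_apply, zsmul_eq_mul]
  have hinj : Function.Injective φ := by
    rw [injective_iff_map_eq_zero]
    intro z hz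
    obtain ⟨k, rfl⟩ := ZMod.intCast_surjective z
    rw [hφc] at hz
    have h2 : ((k * (p : ℤ) ^ (α - j) : ℤ) : ZMod (p ^ α)) = 0 := by push_cast; rw [ha] at hz; linear_combination hz
    rw [ZMod.intCast_zmod_eq_zero_iff_dvd] at h2
    have h3 : (p : ℤ) ^ (α - j) * (p : ℤ) ^ j ∣ (p : ℤ) ^ (α - j) * k := by
      rw [← pow_add, show (α - j) + j = α by omega, mul_comm ((p:ℤ)^(α-j)) k]
      exact_mod_cast h2
    have h4 : (p : ℤ) ^ j ∣ k :=
      (mul_dvd_mul_iff_left (pow_ne_zero _ hppos)).mp h3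
    rw [ZMod.intCast_zmod_eq_zero_iff_dvd]
    exact_mod_cast h4
  have hmem : ∀ z : ZMod (p ^ j), φ z ∈ Tsub p α j := by
    intro z
    obtain ⟨k, rfl⟩ := ZMod.intCast_surjective z
    rw [mem_Tsub, hφc]
    rw [ha]
    rw [show (p : ZMod (p ^ α)) ^ j * ((k : ZMod (p ^ α)) * (p : ZMod (p ^ α)) ^ (α - j))
        = (k : ZMod (p ^ α)) * ((p : ZMod (p ^ α)) ^ (α - j) * (p : ZMod (p ^ α)) ^ j) by ring,
      hpα, mul_zero]
  have hsurj : ∀ x : ZMod (p ^ α), x ∈ Tsub p α j → ∃ z, φ z = x := by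
    intro x hx
    obtain ⟨y, rfl⟩ := exists_factor hp j hj (mem_Tsub.mp hx)
    obtain ⟨k, rfl⟩ := ZMod.intCast_surjective y
    exact ⟨((k : ℤ) : ZMod (p ^ j)), by rw [hφc, ha, mul_comm]⟩
  have e : ZMod (p ^ j) ≃ (Tsub p α j) :=
    Equiv.ofBijective (fun z => ⟨φ z, hmem z⟩)
      ⟨fun z w hzw => hinj (by simpa using congrArg Subtype.val hzw),
       fun ⟨x, hx⟩ => by
         obtain ⟨z, hz⟩ := hsurj x hx
         exact ⟨z, Subtype.ext hz⟩⟩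
  rw [← Nat.card_congr e, Nat.card_zmod]

lemma card_Hsub {p α : ℕ} (hp : p.Prime) (j : ℕ) (hj : j ≤ α) :
    Nat.card (Hsub p α j) = p ^ j * p ^ j := by
  rw [Hsub, Nat.card_congr (AddSubgroup.prodEquiv (Tsub p α j) (Tsub p α j)).toEquiv,
    Nat.card_prod, card_Tsub hp j hj]

lemma smul_mem_aux {N : ℕ} [NeZero N] (S : AddSubgroup (ZMod N × ZMod N)) (c : ZMod N)
    {w : ZMod N × ZMod N} (hw : w ∈ S) : (c * w.1, c * w.2) ∈ S := by
  have h : (c * w.1, c * w.2) = c.val • w := by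
    have h1 : (c.val : ZMod N) = c := by rw [ZMod.natCast_val, ZMod.cast_id]
    ext
    · show c * w.1 = (c.val • w).1
      rw [Prod.smul_fst, nsmul_eq_mul, h1]
    · show c * w.2 = (c.val • w).2
      rw [Prod.smul_snd, nsmul_eq_mul, h1]
  rw [h]
  exact nsmul_mem hw _


lemma classify {p α : ℕ} (hp : p.Prime) (hp3 : p % 3 = 2) (hα : 1 ≤ α)
    (S : AddSubgroup (ZMod (p ^ α) × ZMod (p ^ α))) (hS : S.map (Mxi (p ^ α)) = S) :
    ∃ j ≤ α, S = Hsub p α j := by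
  classical
  haveI : NeZero (p ^ α) := ⟨pow_ne_zero _ hp.pos.ne'⟩
  have hα0 : α ≠ 0 := by omega
  have hpow0 : ((p : ZMod (p ^ α))) ^ α = 0 := by
    rw [← Nat.cast_pow, ZMod.natCast_self]
  have hPα : S ≤ Hsub p α α := by
    intro z _
    rw [mem_Hsub, hpow0, zero_mul, zero_mul]
    exact ⟨rfl, rfl⟩
  have hex : ∃ j, S ≤ Hsub p α j := ⟨α, hPα⟩
  set j := Nat.find hex with hjdef
  have hjle : j ≤ α := Nat.find_le hPα
  have hSle : S ≤ Hsub p α j := Nat.find_spec hex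
  refine ⟨j, hjle, le_antisymm hSle ?_⟩
  rcases Nat.eq_zero_or_pos j with hj0 | hjpos
  · -- j = 0 : Hsub p α 0 = ⊥
    rw [hj0]
    intro v hv
    rw [mem_Hsub] at hv
    simp only [pow_zero, one_mul] at hv
    have : v = 0 := Prod.ext hv.1 hv.2
    rw [this]
    exact zero_mem S
  · -- j ≥ 1
    have hn : ¬ S ≤ Hsub p α (j - 1) := Nat.find_min hex (by omega)
    obtain ⟨z, hzS, hzH⟩ := SetLike.not_le_iff_exists.mp hn
    have hzj := hSle hzS
    rw [mem_Hsub] at hzj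
    obtain ⟨a, ha⟩ := exists_factor hp j hjle hzj.1
    obtain ⟨b, hb⟩ := exists_factor hp j hjle hzj.2
    set cp := ZMod.castHom (dvd_pow_self p hα0) (ZMod p) with hcp
    -- not both a b divisible by p
    have hab : ¬ (cp a = 0 ∧ cp b = 0) := by
      rintro ⟨ha0, hb0⟩
      obtain ⟨a', ha'⟩ := exists_p_factor hα0 ha0
      obtain ⟨b', hb'⟩ := exists_p_factor hα0 hb0
      apply hzH
      rw [mem_Hsub]
      have hexp : (j - 1) + ((α - j) + 1) = α := by omega
      constructor
      · rw [ha, ha']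
        calc (p : ZMod (p ^ α)) ^ (j-1) * ((p : ZMod (p^α)) ^ (α - j) * ((p : ZMod (p^α)) * a'))
            = (p : ZMod (p ^ α)) ^ ((j-1) + ((α - j) + 1)) * a' := by ring
          _ = 0 := by rw [hexp, hpow0, zero_mul]
      · rw [hb, hb']
        calc (p : ZMod (p ^ α)) ^ (j-1) * ((p : ZMod (p^α)) ^ (α - j) * ((p : ZMod (p^α)) * b'))
            = (p : ZMod (p ^ α)) ^ ((j-1) + ((α - j) + 1)) * b' := by ring
          _ = 0 := by rw [hexp, hpow0, zero_mul]
    -- the norm is a unit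
    have hu : IsUnit (a ^ 2 - a * b + b ^ 2) := by
      apply isUnit_of_cast_ne hp hα
      intro h0
      have : cp a ^ 2 - cp a * cp b + cp b ^ 2 = 0 := by
        rw [← map_pow, ← map_mul, ← map_pow, ← map_sub, ← map_add]
        exact h0
      exact hab (normZero hp hp3 this)
    obtain ⟨U, hU⟩ := hu
    set i : ZMod (p ^ α) := ((U⁻¹ : (ZMod (p ^ α))ˣ) : ZMod (p ^ α)) with hi'
    have hi : i * (a ^ 2 - a * b + b ^ 2) = 1 := by
      rw [← hU, hi']
      exact_mod_cast U.inv_mul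
    -- M z ∈ S
    have hMz : Mxi (p ^ α) z ∈ S := by
      rw [← hS]
      exact AddSubgroup.mem_map_of_mem _ hzS
    -- now show H j ≤ S
    intro v hv
    rw [mem_Hsub] at hv
    obtain ⟨x, hx⟩ := exists_factor hp j hjle hv.1
    obtain ⟨y, hy⟩ := exists_factor hp j hjle hv.2
    set c0 : ZMod (p ^ α) := ((a - b) * x + b * y) * i with hc0
    set d0 : ZMod (p ^ α) := (-(b * x) + a * y) * i with hd0
    have hmem : (c0 * z.1, c0 * z.2) + (d0 * (Mxi (p^α) z).1, d0 * (Mxi (p^α) z).2) ∈ S :=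
      add_mem (smul_mem_aux S c0 hzS) (smul_mem_aux S d0 hMz)
    have hveq : v = (c0 * z.1, c0 * z.2) + (d0 * (Mxi (p^α) z).1, d0 * (Mxi (p^α) z).2) := by
      rw [Mxi_apply]
      ext
      · show v.1 = c0 * z.1 + d0 * (-z.2)
        rw [hx, ha, hb, hc0, hd0]
        linear_combination (-((p : ZMod (p^α)) ^ (α - j) * x)) * hi
      · show v.2 = c0 * z.2 + d0 * (z.1 - z.2)
        rw [hy, ha, hb, hc0, hd0]
        linear_combination (-((p : ZMod (p^α)) ^ (α - j) * y)) * hi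
    rw [hveq]
    exact hmem

lemma Hsub_stable {p α : ℕ} (j : ℕ) :
    (Hsub p α j).map (Mxi (p ^ α)) = Hsub p α j := by
  have fwd : ∀ z ∈ Hsub p α j, Mxi (p ^ α) z ∈ Hsub p α j := by
    intro z hz
    rw [mem_Hsub] at hz ⊢
    rw [Mxi_apply]
    constructor
    · show (p : ZMod (p^α)) ^ j * (-z.2) = 0
      rw [mul_neg, hz.2, neg_zero]
    · show (p : ZMod (p^α)) ^ j * (z.1 - z.2) = 0
      rw [mul_sub, hz.1, hz.2, sub_zero]
  apply le_antisymm
  · rintro _ ⟨z, hz, rfl⟩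
    exact fwd z hz
  · intro v hv
    have h3 : Mxi (p ^ α) (Mxi (p ^ α) (Mxi (p ^ α) v)) = v := by
      rw [Mxi_apply, Mxi_apply, Mxi_apply]
      ext <;> simp <;> ring
    exact ⟨Mxi (p ^ α) (Mxi (p ^ α) v), fwd _ (fwd _ hv), h3⟩


/-- If `p ≡ 2 (mod 3)` is prime and `α ≥ 1`, the number of subgroups of
`(ℤ/p^αℤ)²` of order `p^α` stable under `(a,b) ↦ (-b, a-b)` is `1` if `α` is even
and `0` if `α` is odd. -/
theorem count_Mxi_stable_two_mod_three (p α : ℕ) (hp : p.Prime) (hp3 : p % 3 = 2)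
    (hα : 1 ≤ α) :
    (Even α →
      Nat.card {S : AddSubgroup (ZMod (p ^ α) × ZMod (p ^ α)) //
          S.map (Mxi (p ^ α)) = S ∧ Nat.card S = p ^ α} = 1) ∧
    (Odd α →
      Nat.card {S : AddSubgroup (ZMod (p ^ α) × ZMod (p ^ α)) //
          S.map (Mxi (p ^ α)) = S ∧ Nat.card S = p ^ α} = 0) := by
  have key : ∀ (S : AddSubgroup (ZMod (p ^ α) × ZMod (p ^ α))),
      S.map (Mxi (p ^ α)) = S → Nat.card S = p ^ α →
      ∃ j, α = j + j ∧ S = Hsub p α j := by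
    intro S hmap hcard
    obtain ⟨j, hjle, rfl⟩ := classify hp hp3 hα S hmap
    rw [card_Hsub hp j hjle, ← pow_add] at hcard
    have := Nat.pow_right_injective hp.two_le hcard
    exact ⟨j, by omega, rfl⟩
  constructor
  · rintro ⟨m, hm⟩
    have hmle : m ≤ α := by omega
    rw [Nat.card_eq_one_iff_exists]
    refine ⟨⟨Hsub p α m, Hsub_stable m, ?_⟩, ?_⟩
    · rw [card_Hsub hp m hmle, ← pow_add, ← hm]
    · rintro ⟨S, hmap, hcard⟩
      obtain ⟨j, hj, rfl⟩ := key S hmap hcard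
      have : j = m := by omega
      subst this
      rfl
  · rintro hodd
    have : IsEmpty {S : AddSubgroup (ZMod (p ^ α) × ZMod (p ^ α)) //
        S.map (Mxi (p ^ α)) = S ∧ Nat.card S = p ^ α} := by
      refine ⟨?_⟩
      rintro ⟨S, hmap, hcard⟩
      obtain ⟨j, hj, -⟩ := key S hmap hcard
      obtain ⟨m, hm⟩ := hodd
      omega
    exact Nat.card_of_isEmpty
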